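/- Let G be a graph, S a set of vertices, w a vertex, and k a natural number. If the infection time of w from S is at least k, then the infection time of w from S ∪ N_{≥k}(w) is still at least k, where N_{≥k}(w) is the set of vertices at graph distance at least k from w. -/

import Mathlib

open Set

variable {V : Type*}

/-- One step of 2-neighbor bootstrap percolation. -/
def percStep (G : SimpleGraph V) (A : Set V) : Set V :=
  A ∪ {v | ∃ x y, x ≠ y ∧ G.Adj v x ∧ G.Adj v y ∧ x ∈ A ∧ y ∈ A}

/-- The infected set after `n` rounds starting from `S`. -/
def perc (G : SimpleGraph V) (S : Set V) : ℕ → Set V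
  | 0 => S
  | n + 1 => percStep G (perc G S n)

/-- Infection time of a vertex, `∞` if never infected. -/
noncomputable def infTime (G : SimpleGraph V) (S : Set V) (u : V) : ℕ∞ :=
  sInf {n : ℕ∞ | ∃ i : ℕ, n = (i : ℕ∞) ∧ u ∈ perc G S i}

/-- `S` is a hull (percolating) set. -/
def IsHullSet (G : SimpleGraph V) (S : Set V) : Prop :=
  ∃ t, perc G S t = Set.univ

/-- Percolation time of a hull set. -/
noncomputable def percTime (G : SimpleGraph V) (S : Set V) : ℕ :=
  sInf {t | perc G S t = Set.univ}

theorem infTime_ge_of_far_set (G : SimpleGraph V) (S : Set V) (w : V) (k : ℕ)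
    (hw : (k : ℕ∞) ≤ infTime G S w) :
    (k : ℕ∞) ≤ infTime G (S ∪ {z | (k : ℕ∞) ≤ G.edist w z}) w := by
  have key : ∀ i : ℕ, ∀ v : V,
      v ∈ perc G (S ∪ {z | (k : ℕ∞) ≤ G.edist w z}) i →
      G.edist w v + i < (k : ℕ∞) → v ∈ perc G S i := by
    intro i
    induction i with
    | zero =>
      intro v hv hd
      rcases hv with hv | hv
      · exact hv
      · exact absurd (by simpa using hd) (not_lt.mpr hv)
    | succ n ih =>
      intro v hv hd
      rcases hv with hv | ⟨x, y, hxy, hax, hay, hx, hy⟩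
      · left
        refine ih v hv (lt_of_le_of_lt ?_ hd)
        exact add_le_add le_rfl (by exact_mod_cast Nat.le_succ n)
      · right
        have hadj : ∀ u : V, G.Adj v u →
            ∀ hu : u ∈ perc G (S ∪ {z | (k : ℕ∞) ≤ G.edist w z}) n,
            u ∈ perc G S n := by
          intro u hvu hu
          refine ih u hu (lt_of_le_of_lt ?_ hd)
          have h1 : G.edist w u ≤ G.edist w v + 1 := by
            calc G.edist w u ≤ G.edist w v + G.edist v u := G.edist_triangle
            _ ≤ G.edist w v + 1 := by
                gcongr
                exact le_of_eq (SimpleGraph.edist_eq_one_iff_adj.mpr hvu)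
          calc G.edist w u + n ≤ (G.edist w v + 1) + n := by gcongr
          _ = G.edist w v + (n + 1) := by
              rw [add_assoc]
              norm_cast
              rw [Nat.add_comm]
        exact ⟨x, y, hxy, hax, hay, hadj x hax hx, hadj y hay hy⟩
  refine le_sInf ?_
  rintro m ⟨i, rfl, hi⟩
  by_contra hlt
  push_neg at hlt
  have hik : (i : ℕ) < k := by exact_mod_cast hlt
  have hwperc : w ∈ perc G S i := by
    refine key i w hi ?_
    rw [SimpleGraph.edist_self, zero_add]
    exact_mod_cast hik
  have : infTime G S w ≤ (i : ℕ∞) := sInf_le ⟨i, rfl, hwperc⟩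
  exact absurd (le_trans hw this) (not_le.mpr hlt)
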